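/- For every Y < 0 and K ∈ ℝⁿ, taking u = K·Y (so Y' = (s+P'K)·Y), the random variables m and q are integrable and E[q] − (E[m])² + γ⁻Y·E[m] = Y²·F⁻(K). -/

import Mathlib

open MeasureTheory

/-- The function `F⁻` from the paper, written with expectations as Bochner integrals. -/
noncomputable def Fminus {Ω : Type*} [MeasurableSpace Ω] (ℙ : Measure Ω) {n : ℕ}
    (P : Ω → EuclideanSpace ℝ (Fin n)) (s ρ' γm ap am bp bm : ℝ)
    (K : EuclideanSpace ℝ (Fin n)) : ℝ :=
  let pk : Ω → ℝ := fun ω => inner ℝ (P ω) K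
  let A : ℝ :=
    (∫ ω, ap * (s + pk ω) * (if s + pk ω ≤ 0 then (1:ℝ) else 0) ∂ℙ) +
    (∫ ω, am * (s + pk ω) * (if 0 < s + pk ω then (1:ℝ) else 0) ∂ℙ)
  ρ' ^ 2 * ((∫ ω, (pk ω) ^ 2 ∂ℙ) - (∫ ω, pk ω ∂ℙ) ^ 2) +
  (∫ ω, (2 * ρ' * ap + bp) * (s + pk ω) ^ 2 * (if s + pk ω ≤ 0 then (1:ℝ) else 0) ∂ℙ) +
  (∫ ω, (2 * ρ' * am + bm) * (s + pk ω) ^ 2 * (if 0 < s + pk ω then (1:ℝ) else 0) ∂ℙ) -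
  A ^ 2 - 2 * ρ' * A * (s + ∫ ω, pk ω ∂ℙ) + γm * A +
  ρ' * γm * (s + ∫ ω, pk ω ∂ℙ)

/-- The random variable `m = ρ'Y' + a⁺Y'·1{Y' ≥ 0} + a⁻Y'·1{Y' < 0}`,
where `Y' = sY + P'u`. -/
noncomputable def mRV {Ω : Type*} {n : ℕ} (P : Ω → EuclideanSpace ℝ (Fin n))
    (s ρ' ap am : ℝ) (Y : ℝ) (u : EuclideanSpace ℝ (Fin n)) (ω : Ω) : ℝ :=
  let Y' : ℝ := s * Y + inner ℝ (P ω) u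
  ρ' * Y' + ap * Y' * (if 0 ≤ Y' then (1:ℝ) else 0) +
    am * Y' * (if Y' < 0 then (1:ℝ) else 0)

/-- The random variable `q = ρ'²Y'² + (2ρ'a⁺+b⁺)Y'²·1{Y' ≥ 0} + (2ρ'a⁻+b⁻)Y'²·1{Y' < 0}`,
where `Y' = sY + P'u`. -/
noncomputable def qRV {Ω : Type*} {n : ℕ} (P : Ω → EuclideanSpace ℝ (Fin n))
    (s ρ' ap am bp bm : ℝ) (Y : ℝ) (u : EuclideanSpace ℝ (Fin n)) (ω : Ω) : ℝ :=
  let Y' : ℝ := s * Y + inner ℝ (P ω) u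
  ρ' ^ 2 * Y' ^ 2 + (2 * ρ' * ap + bp) * Y' ^ 2 * (if 0 ≤ Y' then (1:ℝ) else 0) +
    (2 * ρ' * am + bm) * Y' ^ 2 * (if Y' < 0 then (1:ℝ) else 0)

lemma aux_int_ind {Ω : Type*} [MeasurableSpace Ω] {ℙ : Measure Ω} (c : ℝ)
    {g : Ω → ℝ} (hgi : Integrable g ℙ) (hgm : Measurable g)
    {p : Ω → Prop} [DecidablePred p] (hp : MeasurableSet {ω | p ω}) :
    Integrable (fun ω => c * g ω * (if p ω then (1:ℝ) else 0)) ℙ := by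
  apply Integrable.mono' (hgi.abs.const_mul |c|)
  · exact (((measurable_const.mul hgm).mul
      (Measurable.ite hp measurable_const measurable_const)).aestronglyMeasurable)
  · filter_upwards with ω
    by_cases h : p ω <;> simp [h, abs_mul, abs_nonneg, mul_nonneg]

/-- For `Y < 0` and `u = K·Y` (so `Y' = (s+P'K)·Y`), the random variables `m` and `q`
are integrable and `E[q] − (E[m])² + γ⁻Y·E[m] = Y²·F⁻(K)`. -/
theorem cost_functional_eq_Fminus {Ω : Type*} [MeasurableSpace Ω] (ℙ : Measure Ω)
    [IsProbabilityMeasure ℙ] {n : ℕ} (hn : 1 ≤ n)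
    (P : Ω → EuclideanSpace ℝ (Fin n)) (hmeas : Measurable P)
    (hL2 : Integrable (fun ω => ‖P ω‖ ^ 2) ℙ)
    (s ρ' γm ap am bp bm : ℝ) (hs : 0 < s) (hρ : 0 < ρ') :
    ∀ Y : ℝ, Y < 0 → ∀ K : EuclideanSpace ℝ (Fin n),
      Integrable (fun ω => mRV P s ρ' ap am Y (Y • K) ω) ℙ ∧
      Integrable (fun ω => qRV P s ρ' ap am bp bm Y (Y • K) ω) ℙ ∧
      (∫ ω, qRV P s ρ' ap am bp bm Y (Y • K) ω ∂ℙ) -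
        (∫ ω, mRV P s ρ' ap am Y (Y • K) ω ∂ℙ) ^ 2 +
        γm * Y * (∫ ω, mRV P s ρ' ap am Y (Y • K) ω ∂ℙ) =
      Y ^ 2 * Fminus ℙ P s ρ' γm ap am bp bm K := by
  intro Y hY K
  set pk : Ω → ℝ := fun ω => inner ℝ (P ω) K with hpk_def
  have hpkm : Measurable pk := hmeas.inner measurable_const
  have hfm : Measurable (fun ω => s + pk ω) := measurable_const.add hpkm
  have hPn : Integrable (fun ω => ‖P ω‖) ℙ :=
    ((memLp_two_iff_integrable_sq hmeas.norm.aestronglyMeasurable).2 hL2).integrable (by norm_num)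
  have hpki : Integrable pk ℙ := by
    apply Integrable.mono' (hPn.const_mul ‖K‖) hpkm.aestronglyMeasurable
    filter_upwards with ω
    calc ‖pk ω‖ = |inner ℝ (P ω) K| := rfl
    _ ≤ ‖P ω‖ * ‖K‖ := abs_real_inner_le_norm _ _
    _ = ‖K‖ * ‖P ω‖ := mul_comm _ _
  have hpk2 : Integrable (fun ω => pk ω ^ 2) ℙ := by
    apply Integrable.mono' (hL2.const_mul (‖K‖^2)) (hpkm.pow_const 2).aestronglyMeasurable
    filter_upwards with ω
    have h1 : |inner ℝ (P ω) K| ≤ ‖P ω‖ * ‖K‖ := abs_real_inner_le_norm _ _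
    have h2 : (0:ℝ) ≤ |inner ℝ (P ω) K| := abs_nonneg _
    calc ‖pk ω ^ 2‖ = |inner ℝ (P ω) K|^2 := by rw [Real.norm_eq_abs, abs_pow]
    _ ≤ ‖K‖^2 * ‖P ω‖^2 := by nlinarith [norm_nonneg (P ω), norm_nonneg K]
  have hfi : Integrable (fun ω => s + pk ω) ℙ := (integrable_const s).add hpki
  have hf2eq : (fun ω => (s + pk ω)^2) = fun ω => s^2 + (2*s) * pk ω + pk ω ^ 2 := by
    funext ω; ring
  have hf2 : Integrable (fun ω => (s + pk ω)^2) ℙ := by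
    rw [hf2eq]; exact ((integrable_const _).add (hpki.const_mul _)).add hpk2
  have hf2m : Measurable (fun ω => (s + pk ω)^2) := hfm.pow_const 2
  have hsle : MeasurableSet {ω | s + pk ω ≤ 0} := measurableSet_le hfm measurable_const
  have hslt : MeasurableSet {ω | 0 < s + pk ω} := measurableSet_lt measurable_const hfm
  have hApi : Integrable (fun ω => ap * (s + pk ω) * (if s + pk ω ≤ 0 then (1:ℝ) else 0)) ℙ :=
    aux_int_ind ap hfi hfm hsle
  have hAmi : Integrable (fun ω => am * (s + pk ω) * (if 0 < s + pk ω then (1:ℝ) else 0)) ℙ :=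
    aux_int_ind am hfi hfm hslt
  have hBpi : Integrable
      (fun ω => (2*ρ'*ap+bp) * (s + pk ω)^2 * (if s + pk ω ≤ 0 then (1:ℝ) else 0)) ℙ :=
    aux_int_ind _ hf2 hf2m hsle
  have hBmi : Integrable
      (fun ω => (2*ρ'*am+bm) * (s + pk ω)^2 * (if 0 < s + pk ω then (1:ℝ) else 0)) ℙ :=
    aux_int_ind _ hf2 hf2m hslt
  -- pointwise forms
  have hm_eq : (fun ω => mRV P s ρ' ap am Y (Y • K) ω) =
      fun ω => Y * (ρ' * (s + pk ω) +
        ap * (s + pk ω) * (if s + pk ω ≤ 0 then (1:ℝ) else 0) +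
        am * (s + pk ω) * (if 0 < s + pk ω then (1:ℝ) else 0)) := by
    funext ω
    show ρ' * (s * Y + inner ℝ (P ω) (Y • K)) + _ + _ = _
    rw [real_inner_smul_right]
    have hE : s * Y + Y * (inner ℝ (P ω) K : ℝ) = Y * (s + pk ω) := by rw [hpk_def]; ring
    rw [hE]
    have h1 : (0 ≤ Y * (s + pk ω)) ↔ (s + pk ω ≤ 0) := by
      constructor <;> intro h <;> nlinarith
    have h2 : (Y * (s + pk ω) < 0) ↔ (0 < s + pk ω) := by
      constructor <;> intro h <;> nlinarith
    rw [if_congr h1 rfl rfl, if_congr h2 rfl rfl]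
    ring
  have hq_eq : (fun ω => qRV P s ρ' ap am bp bm Y (Y • K) ω) =
      fun ω => Y^2 * (ρ'^2 * (s + pk ω)^2 +
        (2*ρ'*ap+bp) * (s + pk ω)^2 * (if s + pk ω ≤ 0 then (1:ℝ) else 0) +
        (2*ρ'*am+bm) * (s + pk ω)^2 * (if 0 < s + pk ω then (1:ℝ) else 0)) := by
    funext ω
    show ρ'^2 * (s * Y + inner ℝ (P ω) (Y • K))^2 + _ + _ = _
    rw [real_inner_smul_right]
    have hE : s * Y + Y * (inner ℝ (P ω) K : ℝ) = Y * (s + pk ω) := by rw [hpk_def]; ring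
    rw [hE]
    have h1 : (0 ≤ Y * (s + pk ω)) ↔ (s + pk ω ≤ 0) := by
      constructor <;> intro h <;> nlinarith
    have h2 : (Y * (s + pk ω) < 0) ↔ (0 < s + pk ω) := by
      constructor <;> intro h <;> nlinarith
    rw [if_congr h1 rfl rfl, if_congr h2 rfl rfl]
    ring
  have him : Integrable (fun ω => mRV P s ρ' ap am Y (Y • K) ω) ℙ := by
    rw [hm_eq]
    exact (((hfi.const_mul ρ').add hApi).add hAmi).const_mul Y
  have hiq : Integrable (fun ω => qRV P s ρ' ap am bp bm Y (Y • K) ω) ℙ := by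
    rw [hq_eq]
    exact (((hf2.const_mul (ρ'^2)).add hBpi).add hBmi).const_mul (Y^2)
  refine ⟨him, hiq, ?_⟩
  -- abbreviations for the integrals
  set Ip := ∫ ω, pk ω ∂ℙ with hIp
  set Ipp := ∫ ω, pk ω ^ 2 ∂ℙ with hIpp
  set Ap := ∫ ω, ap * (s + pk ω) * (if s + pk ω ≤ 0 then (1:ℝ) else 0) ∂ℙ with hAp
  set Am := ∫ ω, am * (s + pk ω) * (if 0 < s + pk ω then (1:ℝ) else 0) ∂ℙ with hAm
  set Bp := ∫ ω, (2*ρ'*ap+bp) * (s + pk ω)^2 * (if s + pk ω ≤ 0 then (1:ℝ) else 0) ∂ℙ with hBp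
  set Bm := ∫ ω, (2*ρ'*am+bm) * (s + pk ω)^2 * (if 0 < s + pk ω then (1:ℝ) else 0) ∂ℙ with hBm
  have hIf : ∫ ω, (s + pk ω) ∂ℙ = s + Ip := by
    rw [integral_add (integrable_const s) hpki, integral_const]
    simp
    rfl
  have hc1 : Integrable (fun ω => s^2 + 2*s * pk ω) ℙ := by
    exact (integrable_const _).add (hpki.const_mul _)
  have hIf2 : ∫ ω, (s + pk ω)^2 ∂ℙ = s^2 + 2*s*Ip + Ipp := by
    rw [hf2eq, integral_add hc1 hpk2,
      integral_add (integrable_const _) (hpki.const_mul _), integral_const,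
      integral_const_mul]
    simp
    rfl
  have hc2 : Integrable (fun ω => ρ' * (s + pk ω) +
      ap * (s + pk ω) * (if s + pk ω ≤ 0 then (1:ℝ) else 0)) ℙ := by
    exact (hfi.const_mul ρ').add hApi
  have hEm : ∫ ω, mRV P s ρ' ap am Y (Y • K) ω ∂ℙ = Y * (ρ' * (s + Ip) + Ap + Am) := by
    rw [hm_eq, integral_const_mul,
      integral_add hc2 hAmi,
      integral_add (hfi.const_mul ρ') hApi, integral_const_mul, hIf]
  have hc3 : Integrable (fun ω => ρ'^2 * (s + pk ω)^2 +
      (2*ρ'*ap+bp) * (s + pk ω)^2 * (if s + pk ω ≤ 0 then (1:ℝ) else 0)) ℙ := by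
    exact (hf2.const_mul (ρ'^2)).add hBpi
  have hEq : ∫ ω, qRV P s ρ' ap am bp bm Y (Y • K) ω ∂ℙ =
      Y^2 * (ρ'^2 * (s^2 + 2*s*Ip + Ipp) + Bp + Bm) := by
    rw [hq_eq, integral_const_mul,
      integral_add hc3 hBmi,
      integral_add (hf2.const_mul (ρ'^2)) hBpi, integral_const_mul, hIf2]
  have hFm : Fminus ℙ P s ρ' γm ap am bp bm K =
      ρ'^2 * (Ipp - Ip^2) + Bp + Bm - (Ap + Am)^2 - 2*ρ'*(Ap + Am)*(s + Ip) +
      γm*(Ap + Am) + ρ'*γm*(s + Ip) := by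
    rw [Fminus]
  rw [hEm, hEq, hFm]
  ring
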